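/- arXiv:0812.2042 — 7 statements merged into one kernel-verified Lean document; each statement's English description precedes it below -/
import Mathlib

section
/- Let h : 𝕋 → ℂ satisfy the quadrature mirror filter equation |h(z)|² + |h(−z)|² = 2 a.e., and suppose the Ruelle operator S_h on L²(𝕋), (S_h f)(z) = h(z)f(z²), has a unit eigenvector f with eigenvalue λ, |λ| = 1. Then |f(z)| = 1 for almost every z ∈ 𝕋. -/
open MeasureTheory

/-- If the Ruelle operator `S_h f (z) = h z * f (z²)` on `L²(𝕋)` associated to a
quadrature mirror filter `h` has a unit eigenvector `f` with eigenvalue `λ` of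
modulus one, then `|f| = 1` almost everywhere. -/
theorem stmt_5 (h : AddCircle (1 : ℝ) → ℂ) (hmeas : Measurable h)
    (hfilter : ∀ᵐ z : AddCircle (1 : ℝ),
      ‖h z‖ ^ 2 + ‖h (z + (((1 : ℝ) / 2 : ℝ) : AddCircle (1 : ℝ)))‖ ^ 2 = 2)
    (f : AddCircle (1 : ℝ) → ℂ) (hf : MemLp f 2 volume)
    (hnorm : ∫ z, ‖f z‖ ^ 2 = 1)
    (lam : ℂ) (hlam : ‖lam‖ = 1)
    (heig : ∀ᵐ z : AddCircle (1 : ℝ), h z * f ((2 : ℕ) • z) = lam * f z) :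
    ∀ᵐ z : AddCircle (1 : ℝ), ‖f z‖ = 1 := by
  set c : AddCircle (1 : ℝ) := (((1 : ℝ) / 2 : ℝ) : AddCircle (1 : ℝ)) with hc
  set F : AddCircle (1 : ℝ) → ℝ := fun z => ‖f z‖ with hFdef
  have herg : Ergodic (fun z : AddCircle (1 : ℝ) => (2 : ℕ) • z) volume :=
    AddCircle.ergodic_nsmul one_lt_two
  have hT : MeasurePreserving (fun z : AddCircle (1 : ℝ) => (2 : ℕ) • z) volume volume :=
    herg.toMeasurePreserving
  have htr : MeasurePreserving (fun z : AddCircle (1 : ℝ) => z + c) volume volume :=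
    measurePreserving_add_right volume c
  have h2c : ∀ z : AddCircle (1 : ℝ), (2 : ℕ) • (z + c) = (2 : ℕ) • z := by
    intro z
    have hc0 : (2 : ℕ) • c = 0 := by
      rw [hc, ← QuotientAddGroup.mk_nsmul]
      norm_num
    rw [smul_add, hc0, add_zero]
  have hFm : AEStronglyMeasurable F volume := hf.aestronglyMeasurable.norm
  have hFint : Integrable F volume := (hf.integrable one_le_two).norm
  -- eigen equation in norms
  have E1 : ∀ᵐ z : AddCircle (1 : ℝ), ‖h z‖ * F ((2 : ℕ) • z) = F z := by
    filter_upwards [heig] with z hz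
    have := congrArg norm hz
    simpa [hFdef, norm_mul, hlam] using this
  have E2 : ∀ᵐ z : AddCircle (1 : ℝ), ‖h (z + c)‖ * F ((2 : ℕ) • z) = F (z + c) := by
    have := htr.quasiMeasurePreserving.ae E1
    filter_upwards [this] with z hz
    rwa [h2c z] at hz
  -- pointwise inequalities
  have keyle : ∀ᵐ z : AddCircle (1 : ℝ), F z + F (z + c) ≤ 2 * F ((2 : ℕ) • z) := by
    filter_upwards [E1, E2, hfilter] with z h1 h2 h3
    have hH1 : (0 : ℝ) ≤ ‖h z‖ := norm_nonneg _
    have hH2 : (0 : ℝ) ≤ ‖h (z + c)‖ := norm_nonneg _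
    have hu : (0 : ℝ) ≤ F ((2 : ℕ) • z) := norm_nonneg _
    nlinarith [sq_nonneg (‖h z‖ - ‖h (z + c)‖), sq_nonneg (‖h z‖ + ‖h (z + c)‖ - 2)]
  have keysq : ∀ᵐ z : AddCircle (1 : ℝ),
      F z ^ 2 + F (z + c) ^ 2 = 2 * F ((2 : ℕ) • z) ^ 2 := by
    filter_upwards [E1, E2, hfilter] with z h1 h2 h3
    calc F z ^ 2 + F (z + c) ^ 2
        = (‖h z‖ ^ 2 + ‖h (z + c)‖ ^ 2) * F ((2 : ℕ) • z) ^ 2 := by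
          rw [← h1, ← h2]; ring
      _ = 2 * F ((2 : ℕ) • z) ^ 2 := by rw [h3]
  -- integral of each translate/dilate of F agrees
  have hint_comp : ∀ {T : AddCircle (1 : ℝ) → AddCircle (1 : ℝ)},
      MeasurePreserving T volume volume → ∫ z, F (T z) = ∫ z, F z := by
    intro T hTm
    have := integral_map (μ := volume) hTm.measurable.aemeasurable
      (f := F) (by rw [hTm.map_eq]; exact hFm)
    rw [hTm.map_eq] at this
    exact this.symm
  have hintT : Integrable (fun z => F ((2 : ℕ) • z)) volume :=
    (hT.integrable_comp hFm).mpr hFint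
  have hinttr : Integrable (fun z => F (z + c)) volume :=
    (htr.integrable_comp hFm).mpr hFint
  -- the nonnegative function with zero integral
  set G : AddCircle (1 : ℝ) → ℝ := fun z => 2 * F ((2 : ℕ) • z) - F z - F (z + c) with hGdef
  have hGint : Integrable G volume := ((hintT.const_mul 2).sub hFint).sub hinttr
  have hGnonneg : (0 : AddCircle (1 : ℝ) → ℝ) ≤ᵐ[volume] G := by
    filter_upwards [keyle] with z hz
    simp only [hGdef, Pi.zero_apply]
    linarith
  have hGzero : ∫ z, G z = 0 := by
    have h1 : ∫ z, F ((2 : ℕ) • z) = ∫ z, F z := hint_comp hT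
    have h2 : ∫ z, F (z + c) = ∫ z, F z := hint_comp htr
    have hi1 : Integrable (fun z => 2 * F ((2 : ℕ) • z) - F z) volume :=
      (hintT.const_mul 2).sub hFint
    have e1 : ∫ z, (2 * F ((2 : ℕ) • z) - F z) - F (z + c)
        = (∫ z, 2 * F ((2 : ℕ) • z) - F z) - ∫ z, F (z + c) :=
      integral_sub hi1 hinttr
    have e2 : ∫ z, 2 * F ((2 : ℕ) • z) - F z
        = (∫ z, 2 * F ((2 : ℕ) • z)) - ∫ z, F z :=
      integral_sub (hintT.const_mul 2) hFint
    simp only [hGdef]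
    rw [e1, e2, integral_const_mul, h1, h2]
    ring
  have hGae : G =ᵐ[volume] 0 :=
    (integral_eq_zero_iff_of_nonneg_ae hGnonneg hGint).mp hGzero
  -- deduce F(2z) = F(z) a.e.
  have hinv : (fun z => F ((2 : ℕ) • z)) =ᵐ[volume] F := by
    filter_upwards [hGae, keysq] with z hz hsq
    simp only [hGdef, Pi.zero_apply] at hz
    have ha : (0 : ℝ) ≤ F z := norm_nonneg _
    have hb : (0 : ℝ) ≤ F (z + c) := norm_nonneg _
    nlinarith [sq_nonneg (F z - F ((2 : ℕ) • z))]
  obtain ⟨k, hk⟩ := herg.ae_eq_const_of_ae_eq_comp_ae hFm hinv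
  -- compute the constant
  have hvol : (volume (Set.univ : Set (AddCircle (1 : ℝ)))).toReal = 1 := by
    rw [AddCircle.measure_univ]; simp
  have hksq : k ^ 2 = 1 := by
    have : ∫ z : AddCircle (1 : ℝ), F z ^ 2 = ∫ _z : AddCircle (1 : ℝ), k ^ 2 := by
      apply integral_congr_ae
      filter_upwards [hk] with z hz
      rw [hz]; rfl
    rw [integral_const, smul_eq_mul, measureReal_def, hvol, one_mul] at this
    rw [← this]
    exact hnorm
  have hne : (volume : Measure (AddCircle (1 : ℝ))) ≠ 0 := by
    intro h0
    rw [h0] at hvol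
    simp at hvol
  have hkpos : 0 ≤ k := by
    have hne' : (ae (volume : Measure (AddCircle (1 : ℝ)))).NeBot := ae_neBot.mpr hne
    obtain ⟨z, hz⟩ := hk.exists
    have : (0 : ℝ) ≤ Function.const (AddCircle (1 : ℝ)) k z := hz ▸ norm_nonneg (f z)
    exact this
  have hk1 : k = 1 := by nlinarith
  filter_upwards [hk] with z hz
  have : F z = k := hz
  simp only [hFdef] at this
  rw [this, hk1]
end

section
/- Let H be a Hilbert space, π a unitary representation of a countable abelian group Γ on H, and δ a unitary operator on H with δ⁻¹ π_γ δ = π_{α(γ)} for an injective endomorphism α of Γ. Suppose v ∈ H is an eigenvector of δ, and suppose that for every w ∈ H the function γ ↦ ⟨π_γ w, w⟩ vanishes at infinity on Γ. Then ⟨π_γ v, v⟩ = 0 for all γ ≠ 0; equivalently, the vectors {π_γ v}_{γ ∈ Γ} are pairwise orthogonal. -/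
/-- If `δ` intertwines a unitary representation `π` of a countable abelian group `Γ`
with its composition with an injective endomorphism `α` satisfying
`⋂ n, range αⁿ = {1}`, if the matrix coefficients `γ ↦ ⟪π γ w, w⟫` vanish at
infinity for every `w`, and if `v` is an eigenvector of `δ`, then the vectors
`π γ v` are pairwise orthogonal: `⟪π γ v, v⟫ = 0` for all `γ ≠ 1`. -/
theorem stmt_8 {H : Type*} [NormedAddCommGroup H] [InnerProductSpace ℂ H]
    [CompleteSpace H] {Γ : Type*} [CommGroup Γ] [Countable Γ]
    (π : Γ →* (H ≃ₗᵢ[ℂ] H)) (α : Γ →* Γ) (hinj : Function.Injective α)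
    (hcap : (⋂ n : ℕ, Set.range ((⇑α)^[n])) = {1})
    (δ : H ≃ₗᵢ[ℂ] H)
    (hintertwine : ∀ (γ : Γ) (x : H), δ.symm ((π γ) (δ x)) = (π (α γ)) x)
    (hvanish : ∀ w : H,
      Filter.Tendsto (fun γ : Γ => (inner ℂ ((π γ) w) w : ℂ)) Filter.cofinite (nhds 0))
    (v : H) (hv : v ≠ 0) (lam : ℂ) (heig : δ v = lam • v) :
    ∀ γ : Γ, γ ≠ 1 → (inner ℂ ((π γ) v) v : ℂ) = 0 := by
  intro γ hγ
  by_contra hne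
  set f : Γ → ℂ := fun σ => (inner ℂ ((π σ) v) v : ℂ) with hf
  -- |lam| = 1
  have hlam : ‖lam‖ = 1 := by
    have h1 : ‖δ v‖ = ‖v‖ := δ.norm_map v
    rw [heig, norm_smul] at h1
    have hv' : ‖v‖ ≠ 0 := norm_ne_zero_iff.mpr hv
    field_simp at h1
    exact h1
  -- f is α-invariant
  have hstep : ∀ σ : Γ, f (α σ) = f σ := by
    intro σ
    have h0 : f (α σ) = (inner ℂ (δ.symm ((π σ) (δ v))) v : ℂ) := by
      show (inner ℂ ((π (α σ)) v) v : ℂ) = _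
      rw [hintertwine]
    rw [h0, ← δ.inner_map_map (δ.symm ((π σ) (δ v))) v, δ.apply_symm_apply, heig,
      map_smul, inner_smul_left, inner_smul_right]
    rw [← mul_assoc, mul_comm (starRingEnd ℂ lam) lam, Complex.mul_conj]
    have hn : Complex.normSq lam = 1 := by
      rw [Complex.normSq_eq_norm_sq, hlam, one_pow]
    rw [hn]
    simp [hf]
  have hiter : ∀ (n : ℕ) (σ : Γ), f ((⇑α)^[n] σ) = f σ := by
    intro n
    induction n with
    | zero => simp
    | succ n ih => intro σ; rw [Function.iterate_succ_apply, ih, hstep]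
  -- the orbit lies in a finite set
  have hmem : {σ : Γ | f σ ∈ Metric.ball (0 : ℂ) ‖f γ‖} ∈ Filter.cofinite :=
    (hvanish v) (Metric.ball_mem_nhds 0 (norm_pos_iff.mpr hne))
  have hfin : {σ : Γ | f σ ∉ Metric.ball (0 : ℂ) ‖f γ‖}.Finite := hmem
  have horb : Set.range (fun n : ℕ => (⇑α)^[n] γ) ⊆
      {σ : Γ | f σ ∉ Metric.ball (0 : ℂ) ‖f γ‖} := by
    rintro _ ⟨n, rfl⟩
    simp only [Set.mem_setOf_eq, Metric.mem_ball, dist_zero_right, hiter, not_lt, le_refl]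
  have hnotinj : ¬ Function.Injective (fun n : ℕ => (⇑α)^[n] γ) := by
    intro hi
    exact (Set.infinite_range_of_injective hi) (hfin.subset horb)
  rw [Function.not_injective_iff] at hnotinj
  obtain ⟨n, m, heq, hnm⟩ := hnotinj
  -- WLOG n < m; get period d ≥ 1
  have key : ∃ d : ℕ, 0 < d ∧ (⇑α)^[d] γ = γ := by
    rcases hnm.lt_or_gt with h | h
    · refine ⟨m - n, Nat.sub_pos_of_lt h, ?_⟩
      apply (hinj.iterate n)
      rw [← Function.iterate_add_apply, Nat.add_sub_cancel' h.le, ← heq]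
    · refine ⟨n - m, Nat.sub_pos_of_lt h, ?_⟩
      apply (hinj.iterate m)
      rw [← Function.iterate_add_apply, Nat.add_sub_cancel' h.le, heq]
  obtain ⟨d, hd, hper⟩ := key
  have hperk : ∀ k : ℕ, (⇑α)^[k * d] γ = γ := by
    intro k
    induction k with
    | zero => simp
    | succ k ih => rw [Nat.succ_mul, Function.iterate_add_apply, hper, ih]
  have hγmem : γ ∈ ⋂ n : ℕ, Set.range ((⇑α)^[n]) := by
    refine Set.mem_iInter.mpr fun n => ?_
    have hle : n ≤ n * d := Nat.le_mul_of_pos_right n hd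
    refine ⟨(⇑α)^[n * d - n] γ, ?_⟩
    rw [← Function.iterate_add_apply, Nat.add_sub_cancel' hle, hperk]
  rw [hcap] at hγmem
  exact hγ hγmem
end

section
/- Let {V_j}_{j∈ℤ} be a family of closed subspaces of a Hilbert space H with V_j ⊆ V_{j+1} and V_{j+1} = δ(V_j) for a unitary operator δ, and suppose ⋃ V_j is dense in H. If δ has an eigenvector v with eigenvalue λ, |λ| = 1, then v ∈ ⋂_{j} V_j; in particular ⋂_j V_j ≠ {0}. -/
/-- If `{V j}` is a nested family of closed subspaces of a Hilbert space with
`δ(V j) = V (j+1)` for a unitary `δ` and dense union, and `v` is an eigenvector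
of `δ` with eigenvalue of modulus one, then `v` lies in every `V j`; in particular
the intersection `⋂ j, V j` is not `{0}`. -/
theorem stmt_9 {H : Type*} [NormedAddCommGroup H] [InnerProductSpace ℂ H]
    [CompleteSpace H] (V : ℤ → Submodule ℂ H)
    (hclosed : ∀ j, IsClosed (V j : Set H))
    (hnested : ∀ j, V j ≤ V (j + 1))
    (δ : H ≃ₗᵢ[ℂ] H)
    (hdil : ∀ j, V (j + 1) = (V j).map (δ.toLinearEquiv : H →ₗ[ℂ] H))
    (hdense : Dense (⋃ j : ℤ, (V j : Set H)))
    (v : H) (hv : v ≠ 0) (lam : ℂ) (hlam : ‖lam‖ = 1) (heig : δ v = lam • v) :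
    (∀ j : ℤ, v ∈ V j) ∧ (⋂ j : ℤ, (V j : Set H)) ≠ {0} := by
  have hlam0 : lam ≠ 0 := by
    intro h; rw [h] at hlam; simp at hlam
  set d : ℤ → ℝ := fun j => Metric.infDist v (V j) with hd
  -- isometry of smul by lam
  have hsmul_iso : Isometry (fun x : H => lam • x) := by
    intro x y
    simp [edist_nndist, nndist_eq_nnnorm, ← smul_sub, nnnorm_smul]
    have : ‖lam‖₊ = 1 := by ext; simpa using hlam
    simp [this]
  have hsmul_img : ∀ j, (fun x : H => lam • x) '' (V j : Set H) = (V j : Set H) := by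
    intro j
    apply Set.eq_of_subset_of_subset
    · rintro _ ⟨x, hx, rfl⟩; exact Submodule.smul_mem _ _ hx
    · intro x hx
      exact ⟨lam⁻¹ • x, Submodule.smul_mem _ _ hx, by simp [smul_smul, hlam0]⟩
  have hsymm : δ.symm v = lam⁻¹ • v := by
    have h := congrArg δ.symm heig
    rw [δ.symm_apply_apply, map_smul] at h
    rw [eq_inv_smul_iff₀ hlam0]
    exact h.symm
  have hstep : ∀ j : ℤ, d (j + 1) = d j := by
    intro j
    have himg : (V (j + 1) : Set H) = δ '' (V j : Set H) := by
      rw [hdil j]; ext x; simp [Submodule.mem_map]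
    have h1 : d (j + 1) = Metric.infDist (δ.symm v) (V j) := by
      rw [hd]; dsimp only
      rw [himg]
      have := Metric.infDist_image (x := δ.symm v) (t := (V j : Set H)) δ.isometry
      rw [δ.apply_symm_apply] at this
      rw [this]
    rw [h1, hsymm]
    have h2 := Metric.infDist_image (x := lam⁻¹ • v) (t := (V j : Set H)) hsmul_iso
    rw [hsmul_img j] at h2
    simp only [smul_smul, mul_inv_cancel₀ hlam0, one_smul] at h2
    rw [← h2]
  have hconst : ∀ j : ℤ, d j = d 0 := by
    intro j
    induction j using Int.induction_on with
    | zero => rfl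
    | succ k ih => rw [hstep k, ih]
    | pred k ih =>
        have h := hstep (-(k:ℤ) - 1)
        simp only [sub_add_cancel] at h
        rw [← h]; exact ih
  have hzero : ∀ j : ℤ, d j = 0 := by
    have hle : ∀ ε : ℝ, 0 < ε → d 0 < ε := by
      intro ε hε
      have hvcl : v ∈ closure (⋃ j : ℤ, (V j : Set H)) := by
        rw [hdense.closure_eq]; trivial
      obtain ⟨x, hx, hdist⟩ := Metric.mem_closure_iff.mp hvcl ε hε
      obtain ⟨s, ⟨k, rfl⟩, hxk⟩ := hx
      calc d 0 = d k := (hconst k).symm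
        _ ≤ dist v x := Metric.infDist_le_dist_of_mem hxk
        _ < ε := hdist
    intro j
    rw [hconst j]
    have h1 : d 0 ≤ 0 := by
      by_contra h
      push_neg at h
      exact absurd (hle (d 0) h) (lt_irrefl _)
    exact le_antisymm h1 Metric.infDist_nonneg
  have hmem : ∀ j : ℤ, v ∈ V j := by
    intro j
    have hne : ((V j : Set H)).Nonempty := ⟨0, (V j).zero_mem⟩
    exact ((hclosed j).mem_iff_infDist_zero hne).mpr (hzero j)
  refine ⟨hmem, ?_⟩
  intro h
  have : v ∈ (⋂ j : ℤ, (V j : Set H)) := Set.mem_iInter.mpr (fun j => hmem j)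
  rw [h] at this
  exact hv this
end

section
/- Let H be a Hilbert space, δ a unitary operator on H, and {ψ_{i,j,γ}} a family of vectors of the form δ^j(π_γ(ψ_i)) forming a frame for H, where π is a unitary representation of a group Γ and the index j ranges over ℤ. If v is an eigenvector of δ with |eigenvalue| = 1, then v = 0. In particular, δ has no (nonzero) eigenvector. -/
set_option maxHeartbeats 1000000 in


/-- If the family `{δ^j (π γ (ψ i))}` (with `j ∈ ℤ`) is a frame for a Hilbert
space `H`, where `δ` and all `π γ` are unitary, then any eigenvector of `δ` with
eigenvalue of modulus one is zero; in particular `δ` has no nonzero eigenvector. -/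
theorem stmt_10 {H : Type*} [NormedAddCommGroup H] [InnerProductSpace ℂ H]
    [CompleteSpace H] {Γ I : Type*} [Countable Γ] [Countable I]
    (δ : H ≃ₗᵢ[ℂ] H) (π : Γ → (H ≃ₗᵢ[ℂ] H)) (ψ : I → H)
    (A B : ℝ) (hA : 0 < A) (hAB : A ≤ B)
    (hframe : ∀ v : H,
      A * ‖v‖ ^ 2 ≤
        (∑' p : ℤ × Γ × I,
          ‖(inner ℂ v ((δ ^ p.1) ((π p.2.1) (ψ p.2.2))) : ℂ)‖ ^ 2) ∧
        (∑' p : ℤ × Γ × I,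
          ‖(inner ℂ v ((δ ^ p.1) ((π p.2.1) (ψ p.2.2))) : ℂ)‖ ^ 2) ≤ B * ‖v‖ ^ 2)
    (v : H) (lam : ℂ) (hlam : ‖lam‖ = 1) (heig : δ v = lam • v) :
    v = 0 := by
  by_contra hv
  have hv' : 0 < ‖v‖ := norm_pos_iff.mpr hv
  have hlam0 : lam ≠ 0 := by
    intro h; rw [h] at hlam; simp at hlam
  -- eigenvector for all integer powers
  have key : ∀ j : ℤ, (δ ^ j) v = lam ^ j • v := by
    intro j
    induction j using Int.induction_on with
    | zero => simp
    | succ n ih =>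
      have h1 : δ ^ ((n : ℤ) + 1) = δ ^ (n : ℤ) * δ := zpow_add_one δ n
      have h2 : (δ ^ ((n : ℤ) + 1)) v = (δ ^ (n : ℤ)) (δ v) := by rw [h1]; rfl
      rw [h2, heig, map_smul, ih, smul_smul]
      congr 1
      rw [zpow_add_one₀ hlam0]
      ring
    | pred n ih =>
      have h1 : δ ^ (-(n : ℤ)) = δ ^ (-(n : ℤ) - 1) * δ := by
        rw [← zpow_add_one]; ring_nf
      have h2 : (δ ^ (-(n : ℤ))) v = (δ ^ (-(n : ℤ) - 1)) (δ v) := by rw [h1]; rfl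
      have h3 : lam ^ (-(n : ℤ)) • v = lam • (δ ^ (-(n : ℤ) - 1)) v := by
        rw [← ih, h2, heig, map_smul]
      have h4 : (δ ^ (-(n : ℤ) - 1)) v = lam⁻¹ • lam ^ (-(n : ℤ)) • v := by
        rw [h3, smul_smul, inv_mul_cancel₀ hlam0, one_smul]
      rw [h4, smul_smul]
      congr 1
      rw [zpow_sub_one₀ hlam0]
      ring
  -- frame coefficients are independent of j
  have hconst : ∀ (j : ℤ) (w : H),
      ‖(inner ℂ v ((δ ^ j) w) : ℂ)‖ = ‖(inner ℂ v w : ℂ)‖ := by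
    intro j w
    have h1 : (inner ℂ v ((δ ^ j) w) : ℂ) = inner ℂ ((δ ^ (-j)) v) w := by
      rw [← LinearIsometryEquiv.inner_map_map (δ ^ j) ((δ ^ (-j)) v) w]
      congr 1
      have : (δ ^ j) ((δ ^ (-j)) v) = (δ ^ j * δ ^ (-j)) v := rfl
      rw [this, ← zpow_add, add_neg_cancel, zpow_zero]
      rfl
    rw [h1, key, inner_smul_left, norm_mul, RCLike.norm_conj, norm_zpow, hlam,
      one_zpow, one_mul]
  obtain ⟨hlow, hup⟩ := hframe v
  have hApos : 0 < A * ‖v‖ ^ 2 := by positivity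
  by_cases hsum : Summable (fun p : ℤ × Γ × I =>
      ‖(inner ℂ v ((δ ^ p.1) ((π p.2.1) (ψ p.2.2))) : ℂ)‖ ^ 2)
  · have hne : ∃ p : ℤ × Γ × I,
        ‖(inner ℂ v ((δ ^ p.1) ((π p.2.1) (ψ p.2.2))) : ℂ)‖ ^ 2 ≠ 0 := by
      by_contra h
      push_neg at h
      have h0 : (∑' p : ℤ × Γ × I,
          ‖(inner ℂ v ((δ ^ p.1) ((π p.2.1) (ψ p.2.2))) : ℂ)‖ ^ 2) = 0 := by
        exact (tsum_congr h).trans tsum_zero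
      rw [h0] at hlow
      linarith
    obtain ⟨⟨j₀, γ₀, i₀⟩, hp₀⟩ := hne
    have hinj : Function.Injective (fun j : ℤ => ((j, γ₀, i₀) : ℤ × Γ × I)) := by
      intro a b h
      simpa using congrArg Prod.fst h
    have hs2 : Summable ((fun p : ℤ × Γ × I =>
        ‖(inner ℂ v ((δ ^ p.1) ((π p.2.1) (ψ p.2.2))) : ℂ)‖ ^ 2) ∘
        (fun j : ℤ => ((j, γ₀, i₀) : ℤ × Γ × I))) :=
      hsum.comp_injective hinj
    have hs3 : Summable (fun _ : ℤ =>
        ‖(inner ℂ v ((π γ₀) (ψ i₀)) : ℂ)‖ ^ 2) :=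
      hs2.congr fun j => by
        simp only [Function.comp_apply]
        rw [hconst]
    rw [summable_const_iff] at hs3
    refine hp₀ ?_
    rw [hconst, hs3]
  · have h0 : (∑' p : ℤ × Γ × I,
        ‖(inner ℂ v ((δ ^ p.1) ((π p.2.1) (ψ p.2.2))) : ℂ)‖ ^ 2) = 0 :=
      tsum_eq_zero_of_not_summable hsum
    rw [h0] at hlow
    linarith
end

section
/- Let π be a unitary representation of a countable abelian group Γ on a Hilbert space H, and δ a unitary on H with δ⁻¹ π_γ δ = π_{α(γ)}. Define π̃ on G = D ⋊ ℤ (D the direct limit of (Γ, α)) by π̃_{([γ,k], j)} = δ^k π_γ δ^{−k−j}. Then π̃ is a well-defined unitary representation of G, satisfying π̃_{α̃(d)} = δ⁻¹ π̃_d δ and π̃_{(d,j)} = π̃_d δ^{−j}. -/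
/-- Let `D` be the direct limit of a countable abelian group `Γ` along an injective
endomorphism `α` (presented by maps `e γ k = [γ, k]` with the usual relations), with
induced automorphism `α̃([γ,k]) = [α(γ),k]`.  Given a unitary representation `π` of
`Γ` on a Hilbert space and a unitary `δ` with `δ⁻¹ π_γ δ = π_{α(γ)}`, the formula
`π̃_{([γ,k],j)} = δ^k π_γ δ^{-k-j}` gives a well-defined unitary representation of
`G = D ⋊ ℤ` satisfying `π̃_{α̃(d)} = δ⁻¹ π̃_d δ` and `π̃_{(d,j)} = π̃_d δ^{-j}`. -/
theorem stmt_15 {H : Type*} [NormedAddCommGroup H] [InnerProductSpace ℂ H]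
    [CompleteSpace H] {Γ : Type*} [CommGroup Γ] [Countable Γ]
    {D : Type*} [CommGroup D]
    (α : Γ →* Γ) (hinj : Function.Injective α)
    (e : Γ → ℕ → D)
    (he_hom : ∀ (γ γ' : Γ) (k : ℕ), e (γ * γ') k = e γ k * e γ' k)
    (he_shift : ∀ (γ : Γ) (k : ℕ), e γ k = e (α γ) (k + 1))
    (he_surj : ∀ d : D, ∃ (γ : Γ) (k : ℕ), d = e γ k)
    (he_inj : ∀ (γ : Γ) (k : ℕ) (γ' : Γ) (k' : ℕ),
      e γ k = e γ' k' ↔ (⇑α)^[k'] γ = (⇑α)^[k] γ')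
    (atil : D ≃* D) (hatil : ∀ (γ : Γ) (k : ℕ), atil (e γ k) = e (α γ) k)
    (π : Γ →* (H ≃ₗᵢ[ℂ] H)) (δ : H ≃ₗᵢ[ℂ] H)
    (hcomm : ∀ γ : Γ, π (α γ) = δ⁻¹ * π γ * δ) :
    ∃ pit : D × ℤ → (H ≃ₗᵢ[ℂ] H),
      (∀ (γ : Γ) (k : ℕ) (j : ℤ),
        pit (e γ k, j) = δ ^ (k : ℤ) * π γ * δ ^ (-(k : ℤ) - j)) ∧
      (∀ (d₁ d₂ : D) (j₁ j₂ : ℤ),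
        pit (d₁ * (atil ^ j₁) d₂, j₁ + j₂) = pit (d₁, j₁) * pit (d₂, j₂)) ∧
      (∀ d : D, pit (atil d, 0) = δ⁻¹ * pit (d, 0) * δ) ∧
      (∀ (d : D) (j : ℤ), pit (d, j) = pit (d, 0) * δ ^ (-j)) := by
  classical
  -- iterated conjugation formula
  have L1 : ∀ (k : ℕ) (γ : Γ), π ((⇑α)^[k] γ) = δ ^ (-(k : ℤ)) * π γ * δ ^ (k : ℤ) := by
    intro k
    induction k with
    | zero => intro γ; simp
    | succ k ih =>
      intro γ
      rw [Function.iterate_succ_apply, ih (α γ), hcomm γ]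
      push_cast
      rw [show -((k : ℤ) + 1) = -k + -1 by ring, zpow_add, zpow_add]
      group
  set Q : Γ → ℕ → (H ≃ₗᵢ[ℂ] H) := fun γ k => δ ^ (k : ℤ) * π γ * δ ^ (-(k : ℤ)) with hQ
  have Qshift : ∀ (γ : Γ) (k m : ℕ), Q ((⇑α)^[m] γ) (k + m) = Q γ k := by
    intro γ k m
    simp only [hQ, L1 m γ]
    push_cast
    rw [zpow_add]
    group
  -- well-definedness
  have L2 : ∀ (γ : Γ) (k : ℕ) (γ' : Γ) (k' : ℕ), e γ k = e γ' k' → Q γ k = Q γ' k' := by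
    intro γ k γ' k' h
    rw [he_inj] at h
    have h1 : Q γ k = Q ((⇑α)^[k'] γ) (k + k') := (Qshift γ k k').symm
    have h2 : Q γ' k' = Q ((⇑α)^[k] γ') (k' + k) := (Qshift γ' k' k).symm
    rw [h1, h2, h, add_comm]
  choose γf kf hdf using he_surj
  set P : D → (H ≃ₗᵢ[ℂ] H) := fun d => Q (γf d) (kf d) with hP
  have Peval : ∀ (γ : Γ) (k : ℕ), P (e γ k) = Q γ k := by
    intro γ k
    exact L2 _ _ _ _ (hdf (e γ k)).symm
  -- e γ k = e (α^[m] γ) (k+m)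
  have eshift : ∀ (γ : Γ) (k m : ℕ), e γ k = e ((⇑α)^[m] γ) (k + m) := by
    intro γ k m
    induction m with
    | zero => simp
    | succ m ih =>
      rw [ih, he_shift, Function.iterate_succ_apply', ← add_assoc]
  -- multiplicativity of P
  have Pmul : ∀ d₁ d₂ : D, P (d₁ * d₂) = P d₁ * P d₂ := by
    intro d₁ d₂
    obtain ⟨γ₁, k₁, h₁⟩ : ∃ γ k, d₁ = e γ k := ⟨γf d₁, kf d₁, hdf d₁⟩
    obtain ⟨γ₂, k₂, h₂⟩ : ∃ γ k, d₂ = e γ k := ⟨γf d₂, kf d₂, hdf d₂⟩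
    have h₁' : d₁ = e ((⇑α)^[k₂] γ₁) (k₁ + k₂) := by rw [h₁, eshift]
    have h₂' : d₂ = e ((⇑α)^[k₁] γ₂) (k₁ + k₂) := by rw [h₂, eshift, add_comm]
    rw [h₁', h₂', ← he_hom, Peval, Peval, Peval]
    simp only [hQ, map_mul]
    group
  have L3 : ∀ d : D, P (atil d) = δ⁻¹ * P d * δ := by
    intro d
    have hd : d = e (γf d) (kf d) := hdf d
    rw [hd, hatil, Peval, Peval]
    simp only [hQ, hcomm]
    group
  have L3' : ∀ d : D, P (atil⁻¹ d) = δ * P d * δ⁻¹ := by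
    intro d
    have := L3 (atil⁻¹ d)
    rw [show atil (atil⁻¹ d) = d from atil.apply_symm_apply d] at this
    rw [this]
    group
  have L4 : ∀ (n : ℤ) (d : D), P ((atil ^ n) d) = δ ^ (-n) * P d * δ ^ n := by
    intro n
    induction n using Int.induction_on with
    | zero => intro d; simp
    | succ n ih =>
      intro d
      have : ((atil ^ ((n : ℤ) + 1)) d) = (atil ^ (n : ℤ)) (atil d) := by
        rw [zpow_add_one]
        rfl
      rw [this, ih, L3]
      rw [show -((n : ℤ) + 1) = -n + -1 by ring, zpow_add, zpow_add]
      group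
    | pred n ih =>
      intro d
      have : ((atil ^ (-(n : ℤ) - 1)) d) = (atil ^ (-(n : ℤ))) (atil⁻¹ d) := by
        rw [sub_eq_add_neg, zpow_add]
        simp only [zpow_neg_one]
        rfl
      rw [this, ih, L3']
      rw [show -(-(n : ℤ) - 1) = n + 1 by ring, zpow_add, show -(n:ℤ) - 1 = -n + -1 by ring,
        zpow_add]
      group
  refine ⟨fun p => P p.1 * δ ^ (-p.2), ?_, ?_, ?_, ?_⟩
  · intro γ k j
    simp only [Peval, hQ]
    rw [show -(k : ℤ) - j = -k + -j by ring, zpow_add]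
    group
  · intro d₁ d₂ j₁ j₂
    simp only [Pmul, L4]
    rw [show -(j₁ + j₂) = -j₁ + -j₂ by ring, zpow_add]
    group
  · intro d
    simp only [L3]
    group
  · intro d j
    simp
end

section
/- Let h : 𝕋 → ℂ be measurable with |h(z)|² + |h(−z)|² = 2 a.e., and suppose there exist δ > 0, 0 < ε < min(1/8, δ/8), and a Borel set F ⊆ 𝕋 of positive measure with F ∩ {z² : z ∈ F} of positive measure, such that |h(z)| ≥ 1 + δ for all z ∈ F. Suppose further that S_h (the Ruelle operator (S_h f)(z) = h(z)f(z²)) has a unit eigenvector f with |f(z)| = 1 a.e. and eigenvalue λ, |λ| = 1. Then a contradiction follows; hence under these hypotheses S_h has no eigenvector of modulus-one eigenvalue with |f| = 1 a.e. -/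
open MeasureTheory

/-- Low-pass contradiction (1×1 case): if `h` is a quadrature mirror filter on
`𝕋` with `|h| ≥ 1 + δ` on a set `F` of positive measure with `F ∩ α*(F)` of
positive measure (`α*` being the squaring/doubling map), then the Ruelle operator
`S_h f (z) = h z f (z²)` cannot have a unit eigenvector `f` with `|f| = 1` a.e.
and eigenvalue of modulus one. -/
theorem stmt_17 (h : AddCircle (1 : ℝ) → ℂ) (hmeas : Measurable h)
    (hfilter : ∀ᵐ z : AddCircle (1 : ℝ),
      ‖h z‖ ^ 2 + ‖h (z + (((1 : ℝ) / 2 : ℝ) : AddCircle (1 : ℝ)))‖ ^ 2 = 2)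
    (δ : ℝ) (hδ : 0 < δ) (ε : ℝ) (hε : 0 < ε) (hε' : ε < min (1 / 8) (δ / 8))
    (F : Set (AddCircle (1 : ℝ))) (hF : MeasurableSet F) (hFpos : 0 < volume F)
    (hFF : 0 < volume (F ∩ ((fun z : AddCircle (1 : ℝ) => (2 : ℕ) • z) '' F)))
    (hlow : ∀ z ∈ F, 1 + δ ≤ ‖h z‖)
    (f : AddCircle (1 : ℝ) → ℂ) (hfmeas : Measurable f)
    (hfnorm : ∀ᵐ z : AddCircle (1 : ℝ), ‖f z‖ = 1)
    (lam : ℂ) (hlam : ‖lam‖ = 1)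
    (heig : ∀ᵐ z : AddCircle (1 : ℝ), lam * f z = h z * f ((2 : ℕ) • z)) :
    False := by
  have hmp : MeasurePreserving (fun z : AddCircle (1 : ℝ) => (2 : ℕ) • z) volume volume := by
    have := MeasureTheory.Measure.measurePreserving_zsmul
      (G := AddCircle (1 : ℝ)) volume (n := 2) (by norm_num)
    have heq : (fun z : AddCircle (1 : ℝ) => (2 : ℤ) • z)
        = fun z : AddCircle (1 : ℝ) => (2 : ℕ) • z := by
      funext z
      rw [show ((2:ℤ) • z) = ((2:ℕ) : ℤ) • z from rfl, natCast_zsmul]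
    rwa [heq] at this
  -- `‖f (2 • z)‖ = 1` a.e.
  have hfnorm2 : ∀ᵐ z : AddCircle (1 : ℝ), ‖f ((2 : ℕ) • z)‖ = 1 := by
    have h0 : volume {w : AddCircle (1 : ℝ) | ¬ ‖f w‖ = 1} = 0 := by
      rw [← MeasureTheory.ae_iff]; exact hfnorm
    have h1 := hmp.quasiMeasurePreserving.preimage_null h0
    rw [MeasureTheory.ae_iff]
    exact h1
  -- combine a.e. facts
  have hae : ∀ᵐ z : AddCircle (1 : ℝ),
      lam * f z = h z * f ((2 : ℕ) • z) ∧ ‖f z‖ = 1 ∧ ‖f ((2 : ℕ) • z)‖ = 1 :=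
    heig.and (hfnorm.and hfnorm2)
  -- find a point of F satisfying these
  have : ¬ (F ∩ {z | lam * f z = h z * f ((2 : ℕ) • z) ∧ ‖f z‖ = 1
      ∧ ‖f ((2 : ℕ) • z)‖ = 1} = ∅) := by
    intro hempty
    have hsub : F ⊆ {z | ¬ (lam * f z = h z * f ((2 : ℕ) • z) ∧ ‖f z‖ = 1
        ∧ ‖f ((2 : ℕ) • z)‖ = 1)} := by
      intro z hz hz'
      exact Set.eq_empty_iff_forall_notMem.mp hempty z ⟨hz, hz'⟩
    have hnull : volume {z : AddCircle (1 : ℝ) | ¬ (lam * f z = h z * f ((2 : ℕ) • z)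
        ∧ ‖f z‖ = 1 ∧ ‖f ((2 : ℕ) • z)‖ = 1)} = 0 := hae
    exact absurd (le_antisymm (le_trans (measure_mono hsub) hnull.le) zero_le)
      hFpos.ne'
  obtain ⟨z, hzF, heq, hf1, hf2⟩ := Set.nonempty_iff_ne_empty.mpr this
  have hnorm : ‖lam * f z‖ = ‖h z * f ((2 : ℕ) • z)‖ := by rw [heq]
  rw [norm_mul, norm_mul, hlam, hf1, hf2, mul_one, mul_one] at hnorm
  have := hlow z hzF
  linarith [hnorm ▸ this]
end

section
/- Let h : 𝕋 → ℂ be essentially bounded and satisfy |h(z)|² + |h(−z)|² = 2 a.e. Then for every n ≥ 1 and almost every ω ∈ 𝕋: (1/2ⁿ) Σ_{ζ : ζ^{2ⁿ} = 1} |h(ωζ) h((ωζ)²) ⋯ h((ωζ)^{2^{n−1}})|² = 1. -/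
set_option maxHeartbeats 1000000

open MeasureTheory

private lemma key_pt (ω : AddCircle (1 : ℝ)) (n j k : ℕ) :
    ((2 ^ (k + 1) : ℕ) • (ω + (((j : ℝ) / 2 ^ (n + 1) : ℝ) : AddCircle (1 : ℝ))))
      = (2 ^ k : ℕ) • ((2 : ℕ) • ω + (((j : ℝ) / 2 ^ n : ℝ) : AddCircle (1 : ℝ))) := by
  have h2 : ((2 : ℕ) • ((j : ℝ) / 2 ^ (n + 1)) : ℝ) = (j : ℝ) / 2 ^ n := by
    rw [pow_succ]; ring
  rw [pow_succ, mul_smul, smul_add, ← AddCircle.coe_nsmul, h2]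

/-- Iterated filter equation: if `h` is an essentially bounded quadrature mirror
filter on `𝕋`, then for every `n ≥ 1` and a.e. `ω`,
`(1/2ⁿ) Σ_{ζ^{2ⁿ}=1} |h(ωζ) h((ωζ)²) ⋯ h((ωζ)^{2^{n-1}})|² = 1`,
where the `2ⁿ`-th roots of unity are enumerated as `j/2ⁿ`, `0 ≤ j < 2ⁿ`. -/
theorem stmt_19 (h : AddCircle (1 : ℝ) → ℂ) (hmeas : Measurable h)
    (hbdd : ∃ C : ℝ, ∀ᵐ z, ‖h z‖ ≤ C)
    (hfilter : ∀ᵐ z : AddCircle (1 : ℝ),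
      ‖h z‖ ^ 2 + ‖h (z + (((1 : ℝ) / 2 : ℝ) : AddCircle (1 : ℝ)))‖ ^ 2 = 2) :
    ∀ n : ℕ, 1 ≤ n →
      ∀ᵐ ω : AddCircle (1 : ℝ),
        (1 : ℝ) / 2 ^ n *
          ∑ j ∈ Finset.range (2 ^ n),
            ‖∏ k ∈ Finset.range n,
              h ((2 ^ k : ℕ) •
                (ω + (((j : ℝ) / 2 ^ n : ℝ) : AddCircle (1 : ℝ))))‖ ^ 2 = 1 := by
  suffices H : ∀ n : ℕ, ∀ᵐ ω : AddCircle (1 : ℝ),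
      (1 : ℝ) / 2 ^ n *
        ∑ j ∈ Finset.range (2 ^ n),
          ‖∏ k ∈ Finset.range n,
            h ((2 ^ k : ℕ) •
              (ω + (((j : ℝ) / 2 ^ n : ℝ) : AddCircle (1 : ℝ))))‖ ^ 2 = 1 by
    exact fun n _ => H n
  intro n
  induction n with
  | zero => simp
  | succ n ih =>
    -- the doubling map is measure preserving
    have hdouble : MeasurePreserving (fun ω : AddCircle (1 : ℝ) => (2 : ℕ) • ω)
        volume volume :=
      (AddCircle.ergodic_nsmul (T := (1 : ℝ)) (one_lt_two)).toMeasurePreserving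
    have ih2 := hdouble.quasiMeasurePreserving.ae ih
    have hshift : ∀ᵐ ω : AddCircle (1 : ℝ), ∀ i : ℕ,
        ‖h (ω + (((i : ℝ) / 2 ^ (n + 1) : ℝ) : AddCircle (1 : ℝ)))‖ ^ 2 +
          ‖h (ω + (((i : ℝ) / 2 ^ (n + 1) : ℝ) : AddCircle (1 : ℝ)) +
            (((1 : ℝ) / 2 : ℝ) : AddCircle (1 : ℝ)))‖ ^ 2 = 2 := by
      rw [ae_all_iff]
      intro i
      have H := (measurePreserving_add_right volume
        (((i : ℝ) / 2 ^ (n + 1) : ℝ) : AddCircle (1 : ℝ))).quasiMeasurePreserving.ae hfilter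
      exact H
    filter_upwards [ih2, hshift] with ω h1 h2
    set c : ℕ → AddCircle (1 : ℝ) := fun j => (((j : ℝ) / 2 ^ (n + 1) : ℝ) : AddCircle (1 : ℝ))
    set g : ℕ → ℝ := fun j =>
      ‖∏ k ∈ Finset.range (n + 1), h ((2 ^ k : ℕ) • (ω + c j))‖ ^ 2 with hg
    set P : ℕ → ℝ := fun i =>
      ‖∏ k ∈ Finset.range n,
        h ((2 ^ k : ℕ) • ((2 : ℕ) • ω + (((i : ℝ) / 2 ^ n : ℝ) : AddCircle (1 : ℝ))))‖ ^ 2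
      with hP
    -- split each g j
    have hgsplit : ∀ j : ℕ, g j = ‖h (ω + c j)‖ ^ 2 *
        ‖∏ k ∈ Finset.range n, h ((2 ^ (k + 1) : ℕ) • (ω + c j))‖ ^ 2 := by
      intro j
      rw [hg]
      simp only [Finset.prod_range_succ']
      rw [norm_mul, mul_pow, mul_comm]
      simp [pow_zero, one_smul]
    have hkey : ∀ i : ℕ, i < 2 ^ n → g i + g (i + 2 ^ n) = 2 * P i := by
      intro i _
      have hprod : ∀ j : ℕ, ((j : ℝ) / 2 ^ n : ℝ) = ((i : ℝ) / 2 ^ n) →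
          ‖∏ k ∈ Finset.range n, h ((2 ^ (k + 1) : ℕ) • (ω + c j))‖ ^ 2 = P i := by
        intro j hj
        rw [hP]
        congr 2
        refine Finset.prod_congr rfl fun k _ => ?_
        rw [key_pt ω n j k, hj]
      -- product part for j = i
      have hPi : ‖∏ k ∈ Finset.range n, h ((2 ^ (k + 1) : ℕ) • (ω + c i))‖ ^ 2 = P i :=
        hprod i rfl
      -- product part for j = i + 2^n : differs by adding 1 which vanishes
      have hPi2 : ‖∏ k ∈ Finset.range n, h ((2 ^ (k + 1) : ℕ) • (ω + c (i + 2 ^ n)))‖ ^ 2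
          = P i := by
        rw [hP]
        congr 2
        refine Finset.prod_congr rfl fun k _ => ?_
        rw [key_pt ω n (i + 2 ^ n) k]
        congr 2
        have : (((i + 2 ^ n : ℕ) : ℝ) / 2 ^ n : ℝ) = ((i : ℝ) / 2 ^ n) + 1 := by
          push_cast; field_simp
        rw [this, AddCircle.coe_add_period (1 : ℝ) ((i : ℝ) / 2 ^ n)]
      -- first factor for j = i + 2^n
      have hc2 : c (i + 2 ^ n) = c i + (((1 : ℝ) / 2 : ℝ) : AddCircle (1 : ℝ)) := by
        have : (((i + 2 ^ n : ℕ) : ℝ) / 2 ^ (n + 1) : ℝ)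
            = (i : ℝ) / 2 ^ (n + 1) + (1 : ℝ) / 2 := by
          push_cast; rw [pow_succ]; field_simp
        simp only [c, this, AddCircle.coe_add]
      rw [hgsplit i, hgsplit (i + 2 ^ n), hPi, hPi2, hc2, ← add_assoc, ← add_mul, h2 i]
    -- now combine the sums
    have hsum : ∑ j ∈ Finset.range (2 ^ (n + 1)), g j
        = 2 * ∑ i ∈ Finset.range (2 ^ n), P i := by
      have h2n : 2 ^ (n + 1) = 2 ^ n + 2 ^ n := by rw [pow_succ]; ring
      rw [h2n, Finset.sum_range_add, ← Finset.sum_add_distrib, Finset.mul_sum]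
      refine Finset.sum_congr rfl fun i hi => ?_
      rw [add_comm (2 ^ n) i]
      exact hkey i (Finset.mem_range.1 hi)
    calc (1 : ℝ) / 2 ^ (n + 1) * ∑ j ∈ Finset.range (2 ^ (n + 1)), g j
        = (1 : ℝ) / 2 ^ n * ∑ i ∈ Finset.range (2 ^ n), P i := by
          rw [hsum, pow_succ]; ring
      _ = 1 := h1
end
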